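/- For the complete graph of n > 1 nodes with q_{i,j} = 1/(n−1) for all i ≠ j, and any nonempty proper subset S ⊂ V, the spectrum of Q_S consists of: the eigenvalue −1 with multiplicity |S|, the eigenvalue −|S|/(n−1) with multiplicity 1, and the eigenvalue −n/(n−1) with multiplicity n−|S|−1. In particular, the largest eigenvalue of Q_S equals −|S|/(n−1). -/

import Mathlib

open Matrix Finset Polynomial

/-- The matrix `Q_S`. -/
noncomputable def QS {n : ℕ} (Q : Matrix (Fin n) (Fin n) ℝ) (S : Finset (Fin n)) :
    Matrix (Fin n) (Fin n) ℝ :=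
  fun i j => if i = j then -(∑ l, Q i l) else if i ∈ S then 0 else Q i j

/-- The largest (real) eigenvalue of a matrix. -/
noncomputable def lambdaMax {n : ℕ} (M : Matrix (Fin n) (Fin n) ℝ) : ℝ :=
  sSup {μ : ℝ | ∃ x : Fin n → ℝ, x ≠ 0 ∧ M.mulVec x = μ • x}

/-- The complete-graph contact rate matrix with rates `1/(n-1)`. -/
noncomputable def Qcomplete (n : ℕ) : Matrix (Fin n) (Fin n) ℝ :=
  fun i j => if i = j then 0 else 1 / ((n : ℝ) - 1)

lemma aux_det_field {ι : Type*} [Fintype ι] [DecidableEq ι] [Nonempty ι]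
    (y z : ℝ) (h : y ≠ z) :
    (Matrix.of fun i j : ι => if i = j then y else z).det
      = (y - z) ^ (Fintype.card ι - 1) * (y + (Fintype.card ι - 1 : ℕ) * z) := by
  have hyz : y - z ≠ 0 := sub_ne_zero.mpr h
  have hM : (Matrix.of fun i j : ι => if i = j then y else z)
      = (y - z) • (1 + Matrix.replicateCol Unit (fun _ : ι => z / (y - z)) * Matrix.replicateRow Unit (fun _ : ι => (1:ℝ))) := by
    ext i j
    by_cases hij : i = j
    · subst hij
      simp only [Matrix.of_apply, if_pos rfl, Matrix.smul_apply, Matrix.add_apply,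
        Matrix.one_apply_eq, Matrix.mul_apply, Matrix.replicateCol_apply, Matrix.replicateRow_apply,
        Finset.sum_const, Finset.card_univ, Fintype.card_unit, one_smul, smul_eq_mul, ↓reduceIte]
      field_simp
      ring
    · simp only [Matrix.of_apply, if_neg hij, Matrix.smul_apply, Matrix.add_apply,
        Matrix.one_apply_ne hij, Matrix.mul_apply, Matrix.replicateCol_apply, Matrix.replicateRow_apply,
        Finset.sum_const, Finset.card_univ, Fintype.card_unit, one_smul, smul_eq_mul, zero_add]
      field_simp
  rw [hM, Matrix.det_smul, Matrix.det_one_add_replicateCol_mul_replicateRow]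
  obtain ⟨m, hm⟩ : ∃ m, Fintype.card ι = m + 1 :=
    ⟨Fintype.card ι - 1, (Nat.succ_pred_eq_of_pos Fintype.card_pos).symm⟩
  rw [hm]
  simp only [Nat.add_sub_cancel, dotProduct, Finset.sum_const, Finset.card_univ,
    Pi.one_apply, one_mul, nsmul_eq_mul, hm]
  field_simp
  push_cast
  ring

lemma aux_det_poly {ι : Type*} [Fintype ι] [DecidableEq ι] [Nonempty ι] (d e : ℝ) :
    (Matrix.of fun i j : ι => if i = j then (X : ℝ[X]) - C d else C e).det
      = (X - C (d + e)) ^ (Fintype.card ι - 1)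
        * (X - C (d - (Fintype.card ι - 1 : ℕ) * e)) := by
  apply Polynomial.eq_of_infinite_eval_eq
  apply Set.Infinite.mono ?_ (Set.Finite.infinite_compl (Set.finite_singleton (d + e)))
  intro t ht
  have h1 : t - d ≠ e := fun hc => ht (by simp only [Set.mem_singleton_iff]; linarith [hc])
  simp only [Set.mem_setOf_eq]
  rw [show (Polynomial.eval t) = (Polynomial.evalRingHom t : ℝ[X] → ℝ) from rfl,
    RingHom.map_det, RingHom.mapMatrix_apply]
  have : (Matrix.of fun i j : ι => if i = j then (X : ℝ[X]) - C d else C e).map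
      (Polynomial.evalRingHom t) = Matrix.of fun i j : ι => if i = j then t - d else e := by
    ext i j
    by_cases hij : i = j <;> simp [hij]
  rw [this, aux_det_field _ _ h1]
  simp only [eval_mul, eval_pow, eval_sub, eval_X, eval_C, eval_natCast, coe_evalRingHom]
  ring

/-- For the complete graph with rates `1/(n-1)` and a nonempty proper subset `S` of `V`,
the spectrum of `Q_S` consists of `-1` with multiplicity `|S|`, `-|S|/(n-1)` with
multiplicity `1`, and `-n/(n-1)` with multiplicity `n-|S|-1`; in particular the largest
eigenvalue of `Q_S` equals `-|S|/(n-1)`. -/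
theorem stmt6 (n : ℕ) (hn : 2 ≤ n) (S : Finset (Fin n))
    (hS : S.Nonempty) (hSproper : S ≠ Finset.univ) :
    ((QS (Qcomplete n) S).charpoly).roots
      = Multiset.replicate S.card (-1 : ℝ)
        + ((-(S.card / ((n : ℝ) - 1)))
            ::ₘ Multiset.replicate (n - S.card - 1) (-((n : ℝ) / ((n : ℝ) - 1)))) ∧
    lambdaMax (QS (Qcomplete n) S) = -((S.card : ℝ) / ((n : ℝ) - 1)) := by
  classical
  have hn1 : (1:ℝ) ≤ (n:ℝ) - 1 := by
    have : (2:ℝ) ≤ (n:ℝ) := by exact_mod_cast hn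
    linarith
  have hb0 : ((n:ℝ) - 1) ≠ 0 := by linarith
  set b : ℝ := 1 / ((n:ℝ) - 1) with hbdef
  set M := QS (Qcomplete n) S with hMdef
  -- row sums of Qcomplete are 1
  have hrow : ∀ i : Fin n, (∑ l, Qcomplete n i l) = 1 := by
    intro i
    have h1 : ∀ l, Qcomplete n i l = b - (if i = l then b else 0) := by
      intro l
      simp only [Qcomplete]
      split
      · simp
      · simp [hbdef]
    rw [Finset.sum_congr rfl fun l _ => h1 l, Finset.sum_sub_distrib, Finset.sum_const,
      Finset.sum_ite_eq, Finset.card_univ, Fintype.card_fin]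
    rw [if_pos (Finset.mem_univ i)]
    rw [nsmul_eq_mul, hbdef]
    field_simp
  have hMentry : ∀ i j, M i j = if i = j then (-1:ℝ) else if i ∈ S then 0 else b := by
    intro i j
    show (if i = j then -(∑ l, Qcomplete n i l) else if i ∈ S then 0 else Qcomplete n i j) = _
    by_cases hij : i = j
    · rw [if_pos hij, if_pos hij, hrow]
    · rw [if_neg hij, if_neg hij]
      by_cases hiS : i ∈ S
      · rw [if_pos hiS, if_pos hiS]
      · rw [if_neg hiS, if_neg hiS]
        simp only [Qcomplete, if_neg hij, hbdef]
  -- cardinalities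
  have hsn : S.card < n := by
    have := Finset.card_lt_card (lt_of_le_of_ne (Finset.subset_univ S) hSproper)
    simpa using this
  have hs1 : 1 ≤ S.card := Finset.Nonempty.card_pos hS
  haveI hne1 : Nonempty {a : Fin n // a ∈ S} := ⟨⟨hS.choose, hS.choose_spec⟩⟩
  haveI hne1' : Nonempty {a : Fin n // ¬a ∉ S} := ⟨⟨hS.choose, not_not.mpr hS.choose_spec⟩⟩
  have hexc : ∃ a : Fin n, a ∉ S := by
    by_contra hc
    push_neg at hc
    exact hSproper (Finset.eq_univ_iff_forall.mpr hc)
  haveI hne2 : Nonempty {a : Fin n // a ∉ S} := ⟨⟨hexc.choose, hexc.choose_spec⟩⟩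
  have hcard1 : Fintype.card {a : Fin n // a ∈ S} = S.card := Fintype.card_coe S
  have hcard2 : Fintype.card {a : Fin n // a ∉ S} = n - S.card := by
    rw [Fintype.card_subtype_compl, Fintype.card_fin, Fintype.card_coe]
  -- the block decomposition of the charpoly
  have hblock : M.charpoly
      = (Matrix.toSquareBlockProp (charmatrix M) (fun j => j ∉ S)).det
        * (Matrix.toSquareBlockProp (charmatrix M) (fun j => ¬ j ∉ S)).det := by
    rw [Matrix.charpoly]
    exact Matrix.twoBlockTriangular_det (charmatrix M) (fun j => j ∉ S)
      (by
        intro i hi j hj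
        rw [not_not] at hi
        have hij : i ≠ j := fun h => hj (h ▸ hi)
        rw [charmatrix_apply_ne _ _ _ hij, hMentry, if_neg hij, if_pos hi, map_zero, neg_zero])
  -- block on S
  have hdetS : (Matrix.toSquareBlockProp (charmatrix M) (fun j => ¬ j ∉ S)).det
      = (X - C (-1)) ^ (S.card - 1) * (X - C (-1)) := by
    have heq : Matrix.toSquareBlockProp (charmatrix M) (fun j => ¬ j ∉ S)
        = Matrix.of fun i j : {a : Fin n // ¬ a ∉ S} => if i = j then (X:ℝ[X]) - C (-1) else C 0 := by
      refine Matrix.ext fun i j => ?_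
      rw [Matrix.toSquareBlockProp_def, Matrix.of_apply, Matrix.of_apply]
      by_cases hij : i = j
      · subst hij
        rw [if_pos rfl, charmatrix_apply_eq, hMentry, if_pos rfl]
      · have hij' : (i : Fin n) ≠ j := fun h => hij (Subtype.ext h)
        rw [if_neg hij, charmatrix_apply_ne _ _ _ hij', hMentry, if_neg hij']
        rw [if_pos (not_not.mp i.2)]
        simp
    rw [heq, aux_det_poly]
    simp only [Fintype.card_subtype]
    rw [show (Finset.univ.filter fun a : Fin n => ¬ a ∉ S) = S from by ext a; simp]
    norm_num
  -- block on Sᶜ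
  have hdetSc : (Matrix.toSquareBlockProp (charmatrix M) (fun j => j ∉ S)).det
      = (X - C (-1 + -b)) ^ (n - S.card - 1)
        * (X - C (-1 - ((n - S.card - 1 : ℕ) : ℝ) * (-b))) := by
    have heq : Matrix.toSquareBlockProp (charmatrix M) (fun j => j ∉ S)
        = Matrix.of fun i j : {a : Fin n // a ∉ S} => if i = j then (X:ℝ[X]) - C (-1) else C (-b) := by
      refine Matrix.ext fun i j => ?_
      rw [Matrix.toSquareBlockProp_def, Matrix.of_apply, Matrix.of_apply]
      by_cases hij : i = j
      · subst hij
        rw [if_pos rfl, charmatrix_apply_eq, hMentry, if_pos rfl]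
      · have hij' : (i : Fin n) ≠ j := fun h => hij (Subtype.ext h)
        rw [if_neg hij, charmatrix_apply_ne _ _ _ hij', hMentry, if_neg hij', if_neg i.2]
        rw [map_neg]
    rw [heq, aux_det_poly]
    simp only [Fintype.card_subtype]
    rw [show (Finset.univ.filter fun a : Fin n => a ∉ S) = Sᶜ from by ext a; simp,
      Finset.card_compl, Fintype.card_fin]
  set r1 : ℝ := -((S.card : ℝ) / ((n : ℝ) - 1)) with hr1
  set r2 : ℝ := -((n : ℝ) / ((n : ℝ) - 1)) with hr2
  have e2 : (-1 + -b : ℝ) = r2 := by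
    rw [hbdef, hr2]; field_simp; ring
  have e1 : (-1 - ((n - S.card - 1 : ℕ) : ℝ) * (-b) : ℝ) = r1 := by
    rw [show ((n - S.card - 1 : ℕ) : ℝ) = (n : ℝ) - S.card - 1 by
      rw [Nat.cast_sub (by omega), Nat.cast_sub (by omega), Nat.cast_one], hbdef, hr1]
    field_simp
    ring
  have hchar : M.charpoly
      = ((X - C r2) ^ (n - S.card - 1) * (X - C r1))
        * ((X - C (-1)) ^ (S.card - 1) * (X - C (-1))) := by
    rw [hblock, hdetSc, hdetS, e2, e1]
  have hroots : M.charpoly.roots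
      = (Multiset.replicate (n - S.card - 1) r2 + {r1})
        + (Multiset.replicate (S.card - 1) (-1 : ℝ) + {-1}) := by
    have n1 : ((X - C r2 : ℝ[X]) ^ (n - S.card - 1)) ≠ 0 :=
      pow_ne_zero _ (X_sub_C_ne_zero r2)
    have n2 : (X - C r1 : ℝ[X]) ≠ 0 := X_sub_C_ne_zero r1
    have n3 : ((X - C (-1) : ℝ[X]) ^ (S.card - 1)) ≠ 0 :=
      pow_ne_zero _ (X_sub_C_ne_zero (-1))
    have n4 : (X - C (-1) : ℝ[X]) ≠ 0 := X_sub_C_ne_zero (-1)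
    rw [hchar, Polynomial.roots_mul (mul_ne_zero (mul_ne_zero n1 n2) (mul_ne_zero n3 n4)),
      Polynomial.roots_mul (mul_ne_zero n1 n2), Polynomial.roots_mul (mul_ne_zero n3 n4),
      Polynomial.roots_pow, Polynomial.roots_pow, Polynomial.roots_X_sub_C,
      Polynomial.roots_X_sub_C, Polynomial.roots_X_sub_C, Multiset.nsmul_singleton,
      Multiset.nsmul_singleton]
  have hrep : Multiset.replicate (S.card - 1) (-1 : ℝ) + {-1}
      = Multiset.replicate S.card (-1 : ℝ) := by
    rw [add_comm, Multiset.singleton_add, ← Multiset.replicate_succ]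
    congr 1
    omega
  have hrootsfinal : M.charpoly.roots
      = Multiset.replicate S.card (-1 : ℝ)
        + (r1 ::ₘ Multiset.replicate (n - S.card - 1) r2) := by
    rw [hroots, hrep, add_comm _ (Multiset.replicate S.card (-1 : ℝ)),
      add_comm (Multiset.replicate (n - S.card - 1) r2) ({r1} : Multiset ℝ),
      Multiset.singleton_add]
  refine ⟨hrootsfinal, ?_⟩
  -- the largest eigenvalue
  have hlam : IsGreatest {μ : ℝ | ∃ x : Fin n → ℝ, x ≠ 0 ∧ M.mulVec x = μ • x} r1 := by
    constructor
    · refine ⟨fun i => if i ∈ S then 0 else 1, ?_, ?_⟩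
      · obtain ⟨a, ha⟩ := hexc
        intro hx
        have := congrFun hx a
        simp [ha] at this
      · funext i
        show ∑ j, M i j * (if j ∈ S then (0:ℝ) else 1) = r1 * (if i ∈ S then (0:ℝ) else 1)
        by_cases hiS : i ∈ S
        · rw [if_pos hiS, mul_zero]
          apply Finset.sum_eq_zero
          intro j _
          rw [hMentry]
          by_cases hij : i = j
          · subst hij
            simp [hiS]
          · simp [hij, hiS]
        · rw [if_neg hiS, mul_one]
          have key : ∀ j, M i j * (if j ∈ S then (0:ℝ) else 1)
              = b * (if j ∈ S then 0 else 1) + (if i = j then (-1 - b) else 0) := by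
            intro j
            rw [hMentry]
            by_cases hij : i = j
            · subst hij
              rw [if_pos rfl, if_pos rfl, if_neg hiS]
              ring
            · simp only [if_neg hij]
              by_cases hjS : j ∈ S
              · simp [hjS, hiS]
              · simp [hjS, hiS]
          rw [Finset.sum_congr rfl fun j _ => key j, Finset.sum_add_distrib,
            ← Finset.mul_sum, Finset.sum_ite_eq, if_pos (Finset.mem_univ i)]
          have hsum : ∑ j : Fin n, (if j ∈ S then (0:ℝ) else 1) = (n:ℝ) - S.card := by
            have h1 : ∀ j : Fin n, (if j ∈ S then (0:ℝ) else 1)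
                = 1 - (if j ∈ S then 1 else 0) := by
              intro j; split <;> norm_num
            rw [Finset.sum_congr rfl fun j _ => h1 j, Finset.sum_sub_distrib,
              Finset.sum_const, Finset.sum_boole, Finset.card_univ, Fintype.card_fin,
              nsmul_eq_mul, mul_one]
            congr 1
            congr 1
            rw [Finset.filter_univ_mem]
          rw [hsum, hbdef, hr1]
          field_simp
          ring
    · rintro μ ⟨x, hx0, hx⟩
      have hdet : ((μ • (1 : Matrix (Fin n) (Fin n) ℝ)) - M).det = 0 := by
        rw [← Matrix.exists_mulVec_eq_zero_iff]
        exact ⟨x, hx0, by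
          rw [Matrix.sub_mulVec, Matrix.smul_mulVec, Matrix.one_mulVec, hx, sub_self]⟩
      have heval : M.charpoly.eval μ = 0 := by
        have h1 : (Polynomial.evalRingHom μ) M.charpoly
            = ((charmatrix M).map (Polynomial.evalRingHom μ)).det := by
          rw [Matrix.charpoly, RingHom.map_det, RingHom.mapMatrix_apply]
        have h2 : (charmatrix M).map (Polynomial.evalRingHom μ)
            = μ • (1 : Matrix (Fin n) (Fin n) ℝ) - M := by
          refine Matrix.ext fun i j => ?_
          by_cases hij : i = j
          · subst hij
            simp [charmatrix_apply_eq, Matrix.one_apply_eq]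
          · simp [charmatrix_apply_ne _ _ _ hij, Matrix.one_apply_ne hij, hij]
        rw [show M.charpoly.eval μ = (Polynomial.evalRingHom μ) M.charpoly from rfl, h1, h2,
          hdet]
      have hmem : μ ∈ M.charpoly.roots := by
        rw [Polynomial.mem_roots (M.charpoly_monic.ne_zero)]
        exact heval
      rw [hrootsfinal] at hmem
      have hb1 : (-1 : ℝ) ≤ r1 := by
        rw [hr1]
        have : (S.card : ℝ) ≤ (n:ℝ) - 1 := by
          have : (S.card : ℝ) + 1 ≤ (n : ℝ) := by exact_mod_cast hsn
          linarith
        rw [neg_le, neg_neg, div_le_one (by linarith)]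
        linarith
      have hb2 : r2 ≤ r1 := by
        rw [hr1, hr2, neg_le_neg_iff]
        gcongr
      simp only [Multiset.mem_add, Multiset.mem_replicate, Multiset.mem_cons] at hmem
      rcases hmem with ⟨-, h⟩ | h | ⟨-, h⟩
      · rw [h]; exact hb1
      · rw [h]
      · rw [h]; exact hb2
  show sSup _ = r1
  exact hlam.csSup_eq
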